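/- Suppose Assumptions 1 and 3 hold. A fundamental trend stationary equilibrium of the two-sector large open economy (i.e., one with P_t = D/(R−1) for all t) exists if and only if λ < λ̄. When λ < λ̄, this equilibrium is unique and satisfies: G = 1, where R ∈ (1, 1/β) is the unique solution of β(R + λπ(R)) = 1; B_t = 0 and P_t = D/(R−1) for all t. (Land Bubble Characterization Theorem in trend stationary equilibria, fundamental part.) -/

import Mathlib

open Filter Topology MeasureTheory

/-- **Assumption 1.** `Φ` (the law `μ` of productivity) is an absolutely continuous
cdf on `[0,∞)` with `Φ(z) < 1` for all `z` and a finite mean. -/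
structure Assumption1 (μ : Measure ℝ) : Prop where
  prob : IsProbabilityMeasure μ
  supp : μ (Set.Iio 0) = 0
  absCont : μ ≪ MeasureTheory.volume
  lt_one : ∀ z : ℝ, μ (Set.Iic z) < 1
  finite_mean : Integrable id μ

/-- The cdf `Φ` of the productivity distribution `μ`. -/
noncomputable def Phi (μ : Measure ℝ) (z : ℝ) : ℝ := (μ (Set.Iic z)).toReal

/-- The risk premium `π(R) = ∫ max{0, mz − R} dΦ(z)` on unlevered capital investment. -/
noncomputable def premium (μ : Measure ℝ) (m R : ℝ) : ℝ := ∫ z, max 0 (m * z - R) ∂μ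

namespace TseAux

noncomputable def sT (μ : Measure ℝ) (x : ℝ) : ℝ := (μ (Set.Ioi x)).toReal

lemma sT_nonneg (μ : Measure ℝ) (x : ℝ) : 0 ≤ sT μ x := ENNReal.toReal_nonneg

lemma sT_le_one (μ : Measure ℝ) [IsProbabilityMeasure μ] (x : ℝ) : sT μ x ≤ 1 := by
  have h := prob_le_one (μ := μ) (s := Set.Ioi x)
  have := ENNReal.toReal_mono (by simp) h
  simpa [sT] using this

lemma phi_add_sT (μ : Measure ℝ) [IsProbabilityMeasure μ] (x : ℝ) : Phi μ x + sT μ x = 1 := by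
  have h : μ (Set.Iic x) + μ (Set.Ioi x) = 1 := by
    simpa [Set.compl_Iic] using measure_add_measure_compl (μ := μ) (measurableSet_Iic (a := x))
  have h2 := congrArg ENNReal.toReal h
  rwa [ENNReal.toReal_add (measure_ne_top _ _) (measure_ne_top _ _), ENNReal.toReal_one] at h2

lemma phi_lt_one {μ : Measure ℝ} (hμ : Assumption1 μ) (x : ℝ) : Phi μ x < 1 := by
  have h := hμ.lt_one x
  have : (μ (Set.Iic x)).toReal < (1 : ENNReal).toReal :=
    (ENNReal.toReal_lt_toReal (ne_top_of_lt h) (by simp)).mpr h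
  simpa [Phi] using this

lemma sT_pos {μ : Measure ℝ} (hμ : Assumption1 μ) (x : ℝ) : 0 < sT μ x := by
  haveI := hμ.prob
  have h1 := phi_add_sT μ x
  have h2 := phi_lt_one hμ x
  linarith

lemma sT_antitone (μ : Measure ℝ) [IsProbabilityMeasure μ] {x y : ℝ} (hxy : x ≤ y) :
    sT μ y ≤ sT μ x := by
  refine ENNReal.toReal_mono (measure_ne_top _ _) (measure_mono ?_)
  exact Set.Ioi_subset_Ioi hxy

lemma integrable_max {μ : Measure ℝ} (hμ : Assumption1 μ) (m R : ℝ) :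
    Integrable (fun z => max 0 (m * z - R)) μ := by
  haveI := hμ.prob
  have hbound : Integrable (fun z : ℝ => |m| * |z| + |R|) μ :=
    (hμ.finite_mean.abs.const_mul |m|).add (integrable_const |R|)
  refine hbound.mono' ?_ ?_
  · exact (continuous_const.max ((continuous_const.mul continuous_id).sub
      continuous_const)).aestronglyMeasurable
  · filter_upwards with z
    have h1 : |m * z - R| ≤ |m * z| + |R| := by
      calc |m * z - R| = |m * z + (-R)| := by ring_nf
        _ ≤ |m * z| + |-R| := abs_add_le _ _
        _ = |m * z| + |R| := by rw [abs_neg]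
    have h2 : |max 0 (m * z - R)| ≤ |m * z - R| := by
      rcases le_total (m * z - R) 0 with h | h
      · rw [max_eq_left h, abs_zero]
        exact abs_nonneg _
      · rw [max_eq_right h]
    show ‖max 0 (m * z - R)‖ ≤ |m| * |z| + |R|
    rw [Real.norm_eq_abs]
    calc |max 0 (m * z - R)| ≤ |m * z| + |R| := le_trans h2 h1
      _ = |m| * |z| + |R| := by rw [abs_mul]


lemma premium_sub_le {μ : Measure ℝ} (hμ : Assumption1 μ) {m : ℝ} (hm : 0 < m)
    {a b : ℝ} (hab : a ≤ b) :
    premium μ m a - premium μ m b ≤ (b - a) * sT μ (a / m) := by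
  haveI := hμ.prob
  have hia := integrable_max hμ m a
  have hib := integrable_max hμ m b
  have hind : Integrable ((Set.Ioi (a / m)).indicator fun _ : ℝ => b - a) μ :=
    (integrable_const (b - a)).indicator measurableSet_Ioi
  have hmono : ∫ z, (max 0 (m * z - a) - max 0 (m * z - b)) ∂μ ≤
      ∫ z, (Set.Ioi (a / m)).indicator (fun _ => b - a) z ∂μ := by
    refine integral_mono (hia.sub hib) hind ?_
    intro z
    by_cases hz : z ∈ Set.Ioi (a / m)
    · rw [Set.indicator_of_mem hz]
      have h0 : 0 ≤ max 0 (m * z - b) := le_max_left _ _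
      have h1 : max 0 (m * z - a) ≤ max 0 (m * z - b) + (b - a) := by
        refine max_le (by linarith) ?_
        have := le_max_right 0 (m * z - b)
        linarith
      simp only [Pi.sub_apply]
      linarith
    · rw [Set.indicator_of_notMem hz]
      have hzle : z ≤ a / m := le_of_not_gt hz
      have h1 : m * z ≤ a := by
        have := (le_div_iff₀ hm).mp hzle
        linarith
      simp only [Pi.sub_apply]
      rw [max_eq_left (by linarith), max_eq_left (by linarith)]
      simp
  rw [premium, premium, ← integral_sub hia hib]
  calc ∫ z, (max 0 (m * z - a) - max 0 (m * z - b)) ∂μ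
      ≤ ∫ z, (Set.Ioi (a / m)).indicator (fun _ => b - a) z ∂μ := hmono
    _ = (μ (Set.Ioi (a / m))).toReal • (b - a) := integral_indicator_const _ measurableSet_Ioi
    _ = (b - a) * sT μ (a / m) := by rw [smul_eq_mul, mul_comm]; rfl

lemma premium_sub_ge {μ : Measure ℝ} (hμ : Assumption1 μ) {m : ℝ} (hm : 0 < m)
    {a b : ℝ} (hab : a ≤ b) :
    (b - a) * sT μ (b / m) ≤ premium μ m a - premium μ m b := by
  haveI := hμ.prob
  have hia := integrable_max hμ m a
  have hib := integrable_max hμ m b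
  have hind : Integrable ((Set.Ioi (b / m)).indicator fun _ : ℝ => b - a) μ :=
    (integrable_const (b - a)).indicator measurableSet_Ioi
  have hmono : ∫ z, (Set.Ioi (b / m)).indicator (fun _ => b - a) z ∂μ ≤
      ∫ z, (max 0 (m * z - a) - max 0 (m * z - b)) ∂μ := by
    refine integral_mono hind (hia.sub hib) ?_
    intro z
    by_cases hz : z ∈ Set.Ioi (b / m)
    · rw [Set.indicator_of_mem hz]
      have h1 : b < m * z := by
        have := (div_lt_iff₀ hm).mp hz
        linarith
      simp only [Pi.sub_apply]
      rw [max_eq_right (by linarith), max_eq_right (by linarith)]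
      linarith
    · rw [Set.indicator_of_notMem hz]
      have h1 : max 0 (m * z - b) ≤ max 0 (m * z - a) :=
        max_le_max le_rfl (by linarith)
      simp only [Pi.sub_apply]
      linarith
  rw [premium, premium, ← integral_sub hia hib]
  calc (b - a) * sT μ (b / m)
      = (μ (Set.Ioi (b / m))).toReal • (b - a) := by rw [smul_eq_mul, mul_comm]; rfl
    _ = ∫ z, (Set.Ioi (b / m)).indicator (fun _ => b - a) z ∂μ :=
        (integral_indicator_const _ measurableSet_Ioi).symm
    _ ≤ _ := hmono

lemma premium_nonneg (μ : Measure ℝ) (m R : ℝ) : 0 ≤ premium μ m R :=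
  integral_nonneg fun z => le_max_left _ _

lemma premium_pos {μ : Measure ℝ} (hμ : Assumption1 μ) {m : ℝ} (hm : 0 < m) (R : ℝ) :
    0 < premium μ m R := by
  haveI := hμ.prob
  have hind : Integrable ((Set.Ioi ((R + 1) / m)).indicator fun _ : ℝ => (1 : ℝ)) μ :=
    (integrable_const (1 : ℝ)).indicator measurableSet_Ioi
  have hmono : ∫ z, (Set.Ioi ((R + 1) / m)).indicator (fun _ => (1 : ℝ)) z ∂μ ≤
      ∫ z, max 0 (m * z - R) ∂μ := by
    refine integral_mono hind (integrable_max hμ m R) ?_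
    intro z
    by_cases hz : z ∈ Set.Ioi ((R + 1) / m)
    · rw [Set.indicator_of_mem hz]
      have h1 : R + 1 < m * z := by
        have := (div_lt_iff₀ hm).mp hz
        linarith
      exact le_max_of_le_right (by linarith)
    · rw [Set.indicator_of_notMem hz]
      exact le_max_left _ _
  have heq : ∫ z, (Set.Ioi ((R + 1) / m)).indicator (fun _ => (1 : ℝ)) z ∂μ
      = sT μ ((R + 1) / m) := by
    rw [integral_indicator_const _ measurableSet_Ioi, smul_eq_mul, mul_one]; rfl
  have := sT_pos hμ ((R + 1) / m)
  rw [premium]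
  linarith [heq ▸ hmono]

lemma premium_continuous {μ : Measure ℝ} (hμ : Assumption1 μ) {m : ℝ} (hm : 0 < m) :
    Continuous (premium μ m) := by
  haveI := hμ.prob
  have key : ∀ a b : ℝ, a ≤ b → |premium μ m a - premium μ m b| ≤ b - a := by
    intro a b hab
    have h1 := premium_sub_le hμ hm hab
    have h2 := premium_sub_ge hμ hm hab
    have h3 : 0 ≤ (b - a) * sT μ (b / m) :=
      mul_nonneg (by linarith) (sT_nonneg μ _)
    have h4 : (b - a) * sT μ (a / m) ≤ b - a := by
      have := sT_le_one μ (a / m)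
      nlinarith [sT_nonneg μ (a / m)]
    rw [abs_le]
    constructor <;> linarith
  refine (LipschitzWith.of_dist_le_mul (K := 1) ?_).continuous
  intro a b
  rw [Real.dist_eq, Real.dist_eq, NNReal.coe_one, one_mul]
  rcases le_total a b with h | h
  · have := key a b h
    calc |premium μ m a - premium μ m b| ≤ b - a := this
      _ ≤ |a - b| := by rw [abs_sub_comm]; exact le_abs_self _
  · have := key b a h
    calc |premium μ m a - premium μ m b| = |premium μ m b - premium μ m a| := abs_sub_comm _ _
      _ ≤ a - b := this
      _ ≤ |a - b| := le_abs_self _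

lemma premium_eq {μ : Measure ℝ} (hμ : Assumption1 μ) {m : ℝ} (hm : 0 < m) (R : ℝ) :
    premium μ m R = m * (∫ z in Set.Ioi (R / m), z ∂μ) - R * sT μ (R / m) := by
  haveI := hμ.prob
  have hint := integrable_max hμ m R
  have hsplit := integral_add_compl (measurableSet_Ioi (a := R / m)) hint
  have hIic : ∫ z in (Set.Ioi (R / m))ᶜ, max 0 (m * z - R) ∂μ = 0 := by
    rw [Set.compl_Ioi]
    rw [setIntegral_congr_fun measurableSet_Iic (g := fun _ => (0 : ℝ))]
    · exact integral_zero _ _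
    · intro z hz
      have : m * z ≤ R := by
        have := (le_div_iff₀ hm).mp (hz : z ≤ R / m)
        linarith
      exact max_eq_left (by linarith)
  have hIoi : ∫ z in Set.Ioi (R / m), max 0 (m * z - R) ∂μ
      = ∫ z in Set.Ioi (R / m), (m * z - R) ∂μ := by
    refine setIntegral_congr_fun measurableSet_Ioi ?_
    intro z hz
    have : R < m * z := by
      have := (div_lt_iff₀ hm).mp (hz : R / m < z)
      linarith
    exact max_eq_right (by linarith)
  have hz_int : IntegrableOn (fun z : ℝ => m * z) (Set.Ioi (R / m)) μ :=
    (hμ.finite_mean.integrableOn (s := Set.Ioi (R / m))).const_mul m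
  have hc_int : IntegrableOn (fun _ : ℝ => R) (Set.Ioi (R / m)) μ := integrableOn_const
    (measure_lt_top _ _).ne
  have hsub : ∫ z in Set.Ioi (R / m), (m * z - R) ∂μ
      = (∫ z in Set.Ioi (R / m), m * z ∂μ) - ∫ _ in Set.Ioi (R / m), R ∂μ :=
    integral_sub hz_int hc_int
  have h1 : ∫ z in Set.Ioi (R / m), m * z ∂μ = m * ∫ z in Set.Ioi (R / m), z ∂μ :=
    integral_const_mul m _
  have h2 : ∫ _ in Set.Ioi (R / m), R ∂μ = (μ (Set.Ioi (R / m))).toReal * R := by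
    rw [setIntegral_const, smul_eq_mul]; rfl
  rw [premium, ← hsplit, hIic, add_zero, hIoi, hsub, h1, h2]
  have : (μ (Set.Ioi (R / m))).toReal = sT μ (R / m) := rfl
  rw [this]
  ring

end TseAux

/-- The leverage threshold `λ̄ = ((1−β)/β)·(∫ max{mz−1, 0} dΦ(z))⁻¹`. -/
noncomputable def lamBar (β m : ℝ) (μ : Measure ℝ) : ℝ :=
  ((1 - β) / β) * (∫ z, max (m * z - 1) 0 ∂μ)⁻¹

namespace TseAux

lemma lamBar_eq (β m : ℝ) (μ : Measure ℝ) :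
    lamBar β m μ = ((1 - β) / β) * (premium μ m 1)⁻¹ := by
  rw [lamBar, premium]
  congr 2
  exact integral_congr_ae (Filter.Eventually.of_forall fun z => max_comm _ _)

/-- A3 in premium form. -/
lemma a3_premium {μ : Measure ℝ} (hμ : Assumption1 μ) {β m : ℝ} (hm : 0 < m)
    (hA3 : 1 - Phi μ (1 / m) < β * m * ∫ z in Set.Ioi (1 / m), z ∂μ) :
    (1 - β) * sT μ (1 / m) < β * premium μ m 1 := by
  haveI := hμ.prob
  have hprem := premium_eq hμ hm 1
  have hphi := phi_add_sT μ (1 / m)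
  have h2 : β * premium μ m 1 = β * m * (∫ z in Set.Ioi (1 / m), z ∂μ) - β * sT μ (1 / m) := by
    rw [hprem]; ring
  linarith

/-- Key: any root `R > 1` of `β(R + λπ(R)) = 1` forces `λ < λ̄`. -/
lemma root_lt_lamBar {μ : Measure ℝ} (hμ : Assumption1 μ) {β lam m : ℝ}
    (hβ : β ∈ Set.Ioo (0 : ℝ) 1) (hlam : 1 ≤ lam) (hm : 0 < m)
    (hA3' : (1 - β) * sT μ (1 / m) < β * premium μ m 1)
    {R : ℝ} (hR : 1 < R) (hroot : β * (R + lam * premium μ m R) = 1) :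
    lam < lamBar β m μ := by
  haveI := hμ.prob
  obtain ⟨hβ0, hβ1⟩ := hβ
  have hlam0 : (0 : ℝ) < lam := by linarith
  set s1 := sT μ (1 / m) with hs1def
  set π1 := premium μ m 1 with hπ1def
  set πR := premium μ m R with hπRdef
  have hs1nn : 0 ≤ s1 := sT_nonneg μ _
  have hπ1pos : 0 < π1 := premium_pos hμ hm 1
  have hπRnn : 0 ≤ πR := premium_nonneg μ m R
  have hub : π1 - πR ≤ (R - 1) * s1 := by
    have := premium_sub_le hμ hm hR.le (a := 1) (b := R)
    simpa [hs1def, hπ1def, hπRdef] using this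
  have key : β * lam * π1 < 1 - β := by
    rcases lt_or_ge (lam * s1) 1 with hs | hs
    · nlinarith [mul_pos (sub_pos.mpr hR) (sub_pos.mpr hs), hub, hroot]
    · exfalso
      have hA3l : lam * ((1 - β) * s1) < lam * (β * π1) :=
        mul_lt_mul_of_pos_left hA3' hlam0
      rcases le_or_gt (β * R) 1 with hbR | hbR
      · have h1 : 0 ≤ (lam * s1 - 1) * (1 - β * R) :=
          mul_nonneg (by linarith) (by linarith)
        nlinarith [mul_le_mul_of_nonneg_left hub (by positivity : (0:ℝ) ≤ β * lam)]
      · nlinarith [mul_nonneg (mul_nonneg hβ0.le hlam0.le) hπRnn]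
  rw [lamBar_eq]
  have h2 : lam * π1 < (1 - β) / β := by
    rw [lt_div_iff₀ hβ0]
    nlinarith
  calc lam = lam * π1 * π1⁻¹ := by field_simp
    _ < (1 - β) / β * π1⁻¹ := by
        exact mul_lt_mul_of_pos_right h2 (inv_pos.mpr hπ1pos)

lemma lam_s1_lt_one {μ : Measure ℝ} (hμ : Assumption1 μ) {β lam m : ℝ}
    (hβ : β ∈ Set.Ioo (0 : ℝ) 1) (hlam : 1 ≤ lam) (hm : 0 < m)
    (hA3' : (1 - β) * sT μ (1 / m) < β * premium μ m 1)
    (hlt : lam < lamBar β m μ) : lam * sT μ (1 / m) < 1 := by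
  haveI := hμ.prob
  obtain ⟨hβ0, hβ1⟩ := hβ
  have hlam0 : (0 : ℝ) < lam := by linarith
  have hπ1pos : 0 < premium μ m 1 := premium_pos hμ hm 1
  by_contra hcon
  push_neg at hcon
  have h1 : β * (lam * premium μ m 1) < 1 - β := by
    rw [lamBar_eq] at hlt
    have ha := mul_lt_mul_of_pos_right hlt hπ1pos
    rw [mul_assoc, inv_mul_cancel₀ hπ1pos.ne', mul_one] at ha
    have hb := mul_lt_mul_of_pos_left ha hβ0
    have hc : β * ((1 - β) / β) = 1 - β := by field_simp
    linarith
  have h2 : (1 - β) ≤ (1 - β) * (lam * sT μ (1 / m)) := by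
    nlinarith
  have h3 : lam * ((1 - β) * sT μ (1 / m)) < lam * (β * premium μ m 1) :=
    mul_lt_mul_of_pos_left hA3' hlam0
  nlinarith

lemma exists_root {μ : Measure ℝ} (hμ : Assumption1 μ) {β lam m : ℝ}
    (hβ : β ∈ Set.Ioo (0 : ℝ) 1) (hlam : 1 ≤ lam) (hm : 0 < m)
    (hA3' : (1 - β) * sT μ (1 / m) < β * premium μ m 1)
    (hlt : lam < lamBar β m μ) :
    ∃ R : ℝ, 1 < R ∧ R < 1 / β ∧ β * (R + lam * premium μ m R) = 1 ∧
      lam * sT μ (R / m) < 1 := by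
  haveI := hμ.prob
  obtain ⟨hβ0, hβ1⟩ := hβ
  have hlam0 : (0 : ℝ) < lam := by linarith
  have hπ1pos : 0 < premium μ m 1 := premium_pos hμ hm 1
  have hs1 : lam * sT μ (1 / m) < 1 := lam_s1_lt_one hμ ⟨hβ0, hβ1⟩ hlam hm hA3' hlt
  set f : ℝ → ℝ := fun R => β * (R + lam * premium μ m R) with hfdef
  have hf1 : f 1 < 1 := by
    have h1 : β * (lam * premium μ m 1) < 1 - β := by
      rw [lamBar_eq] at hlt
      have ha := mul_lt_mul_of_pos_right hlt hπ1pos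
      rw [mul_assoc, inv_mul_cancel₀ hπ1pos.ne', mul_one] at ha
      have hb := mul_lt_mul_of_pos_left ha hβ0
      have hc : β * ((1 - β) / β) = 1 - β := by field_simp
      linarith
    simp only [hfdef]
    nlinarith
  have hfb : 1 < f (1 / β) := by
    have hπb : 0 < premium μ m (1 / β) := premium_pos hμ hm _
    simp only [hfdef]
    have hexp : β * (1 / β + lam * premium μ m (1 / β))
        = 1 + β * (lam * premium μ m (1 / β)) := by
      field_simp
    rw [hexp]
    nlinarith [mul_pos hβ0 (mul_pos hlam0 hπb)]
  have hab : (1 : ℝ) ≤ 1 / β := by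
    rw [le_div_iff₀ hβ0]; linarith
  have hcont : ContinuousOn f (Set.Icc 1 (1 / β)) :=
    (continuous_const.mul (continuous_id.add
      (continuous_const.mul (premium_continuous hμ hm)))).continuousOn
  have hsub := intermediate_value_Ioo hab hcont
  have h1mem : (1 : ℝ) ∈ Set.Ioo (f 1) (f (1 / β)) := ⟨hf1, hfb⟩
  obtain ⟨R, hRmem, hfR⟩ := hsub h1mem
  refine ⟨R, hRmem.1, hRmem.2, hfR, ?_⟩
  have hmm : 1 / m ≤ R / m := by
    gcongr
    exact hRmem.1.le
  have := sT_antitone μ hmm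
  nlinarith [sT_nonneg μ (R / m)]

/-- Uniqueness of the root subject to the threshold condition. -/
lemma root_unique {μ : Measure ℝ} (hμ : Assumption1 μ) {β lam m : ℝ}
    (hβ0 : 0 < β) (hlam : 1 ≤ lam) (hm : 0 < m)
    {R R' : ℝ}
    (hroot : β * (R + lam * premium μ m R) = 1) (hthr : lam * sT μ (R / m) < 1)
    (hroot' : β * (R' + lam * premium μ m R') = 1) (hthr' : lam * sT μ (R' / m) < 1) :
    R = R' := by
  haveI := hμ.prob
  have hlam0 : (0 : ℝ) < lam := by linarith
  rcases lt_trichotomy R R' with h | h | h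
  · exfalso
    have hub := premium_sub_le hμ hm h.le
    nlinarith [mul_pos (sub_pos.mpr h) (sub_pos.mpr hthr),
      mul_le_mul_of_nonneg_left hub (by positivity : (0:ℝ) ≤ β * lam)]
  · exact h
  · exfalso
    have hub := premium_sub_le hμ hm h.le
    nlinarith [mul_pos (sub_pos.mpr h) (sub_pos.mpr hthr'),
      mul_le_mul_of_nonneg_left hub (by positivity : (0:ℝ) ≤ β * lam)]


end TseAux

/-- **Trend stationary equilibrium** of the two-sector large open economy with linear
technology `F(K,X) = mK + DX`: gross risk-free rate `R > 1`, growth rate `G > 0`,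
threshold `z̄ = R/m` with `Φ(z̄) > 1 − 1/λ`, and sequences of aggregate wealth,
capital, land price, and external savings satisfying the equilibrium conditions,
with `B_t/W_t → 0`. -/
structure TSE (μ : Measure ℝ) (β lam m D : ℝ)
    (R G : ℝ) (W K P B : ℕ → ℝ) : Prop where
  hR : 1 < R
  hG : 0 < G
  hthr : 1 - 1 / lam < Phi μ (R / m)
  hW : ∀ t, 0 < W t
  hP : ∀ t, 0 < P t
  price : ∀ t, R = (P (t + 1) + D) / P t
  growth : G = β * (R + lam * premium μ m R)
  Wdyn : ∀ t, W (t + 1) = G * W t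
  Kdyn : ∀ t, K (t + 1) = β * lam * W t * ∫ z in Set.Ioi (R / m), z ∂μ
  bond : ∀ t, P t + B t = β * (lam * Phi μ (R / m) + 1 - lam) * W t
  wealth : ∀ t, W (t + 1) = m * K (t + 1) + R * (P t + B t)
  hBW : Filter.Tendsto (fun t => B t / W t) Filter.atTop (nhds 0)

namespace TseAux

lemma thr_iff {μ : Measure ℝ} [IsProbabilityMeasure μ] {lam x : ℝ} (hlam0 : 0 < lam) :
    1 - 1 / lam < Phi μ x ↔ lam * sT μ x < 1 := by
  have hphi := phi_add_sT μ x
  rw [show (1 : ℝ) - 1 / lam < Phi μ x ↔ sT μ x < 1 / lam by constructor <;> intro h <;> linarith]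
  rw [lt_div_iff₀ hlam0, mul_comm]

lemma tse_props {μ : Measure ℝ} (hμ : Assumption1 μ) {β lam m D : ℝ}
    (hβ : β ∈ Set.Ioo (0 : ℝ) 1) (hlam : 1 ≤ lam) (hm : 0 < m) (hD : 0 < D)
    {R G : ℝ} {W K P B : ℕ → ℝ}
    (h : TSE μ β lam m D R G W K P B) (hfund : ∀ t, P t = D / (R - 1)) :
    G = 1 ∧ β * (R + lam * premium μ m R) = 1 ∧ R < 1 / β ∧ (∀ t, B t = 0) ∧
      ∀ t, W t = (D / (R - 1)) / (β * (lam * Phi μ (R / m) + 1 - lam)) := by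
  haveI := hμ.prob
  obtain ⟨hβ0, hβ1⟩ := hβ
  have hlam0 : (0 : ℝ) < lam := lt_of_lt_of_le one_pos hlam
  set c := lam * Phi μ (R / m) + 1 - lam with hcdef
  have hc : 0 < c := by
    have h1 : lam * (1 - 1 / lam) < lam * Phi μ (R / m) := mul_lt_mul_of_pos_left h.hthr hlam0
    have h2 : lam * (1 - 1 / lam) = lam - 1 := by field_simp
    simp only [hcdef]; linarith
  set Pb := D / (R - 1) with hPbdef
  have hR1 : (0 : ℝ) < R - 1 := by linarith [h.hR]
  have hPb : 0 < Pb := div_pos hD hR1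
  have hBt : ∀ t, B t = β * c * W t - Pb := by
    intro t
    have hb := h.bond t
    rw [hfund t] at hb
    simp only [hcdef]
    linarith
  have hquot : ∀ t, B t / W t = β * c - Pb / W t := by
    intro t
    rw [hBt t]
    have := (h.hW t).ne'
    field_simp
  have hlim : Tendsto (fun t => Pb / W t) atTop (nhds (β * c)) := by
    have h0 := h.hBW
    have heq : (fun t => Pb / W t) = fun t => β * c - B t / W t := by
      funext t; rw [hquot t]; ring
    rw [heq]
    simpa using tendsto_const_nhds.sub h0
  have hWpow : ∀ t, W t = G ^ t * W 0 := by
    intro t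
    induction t with
    | zero => simp
    | succ n ih => rw [h.Wdyn n, ih, pow_succ]; ring
  have hW0 := h.hW 0
  have heqf : (fun t : ℕ => Pb / W t) = fun t : ℕ => (Pb / W 0) * (G⁻¹) ^ t := by
    funext t
    have hGt : (G : ℝ) ^ t ≠ 0 := pow_ne_zero t h.hG.ne'
    rw [hWpow t, inv_pow, div_mul_eq_div_div_swap, div_eq_mul_inv]
  have hG1 : G = 1 := by
    rcases lt_trichotomy G 1 with hlt | heq | hgt
    · exfalso
      have hGinv : 1 < G⁻¹ := (one_lt_inv₀ h.hG).mpr hlt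
      have htop : Tendsto (fun t : ℕ => (G⁻¹) ^ t) atTop atTop :=
        tendsto_pow_atTop_atTop_of_one_lt hGinv
      have ha : 0 < Pb / W 0 := div_pos hPb hW0
      have htop2 : Tendsto (fun t : ℕ => (Pb / W 0) * (G⁻¹) ^ t) atTop atTop :=
        htop.const_mul_atTop ha
      rw [heqf] at hlim
      exact not_tendsto_atTop_of_tendsto_nhds hlim htop2
    · exact heq
    · exfalso
      have h1 : (G : ℝ)⁻¹ < 1 := inv_lt_one_of_one_lt₀ hgt
      have h2 : (0 : ℝ) ≤ G⁻¹ := inv_nonneg.mpr h.hG.le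
      have hz : Tendsto (fun t : ℕ => (Pb / W 0) * (G⁻¹) ^ t) atTop
          (nhds ((Pb / W 0) * 0)) :=
        (tendsto_pow_atTop_nhds_zero_of_lt_one h2 h1).const_mul _
      rw [heqf] at hlim
      have hu := tendsto_nhds_unique hlim hz
      have hbc : 0 < β * c := mul_pos hβ0 hc
      rw [mul_zero] at hu
      linarith
  have hWconst : ∀ t, W t = W 0 := fun t => by rw [hWpow t, hG1, one_pow, one_mul]
  have hPW : Pb / W 0 = β * c := by
    have heqf2 : (fun t : ℕ => Pb / W t) = fun _ : ℕ => Pb / W 0 :=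
      funext fun t => by rw [hWconst t]
    rw [heqf2] at hlim
    exact tendsto_nhds_unique tendsto_const_nhds hlim
  have hPbW : Pb = β * c * W 0 := by
    rw [← hPW]
    field_simp
  have hB0 : ∀ t, B t = 0 := fun t => by rw [hBt t, hWconst t]; linarith [hPbW]
  have hroot : β * (R + lam * premium μ m R) = 1 := by rw [← h.growth, hG1]
  have hRb : R < 1 / β := by
    have hπ := premium_pos hμ hm R
    rw [lt_div_iff₀ hβ0]
    nlinarith [mul_pos (mul_pos hβ0 hlam0) hπ, hroot]
  have hWval : ∀ t, W t = Pb / (β * c) := by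
    intro t
    rw [hWconst t, hPbW]
    field_simp
  exact ⟨hG1, hroot, hRb, hB0, fun t => hWval t⟩


end TseAux

/-- **Land Bubble Characterization in trend stationary equilibria, fundamental part.**
Under Assumptions 1 and 3, a fundamental trend stationary equilibrium (one with
`P_t = D/(R−1)` for all `t`) exists if and only if `λ < λ̄`; any such equilibrium has
`G = 1`, interest rate `R ∈ (1, 1/β)` solving `β(R + λπ(R)) = 1`, and `B_t = 0`;
and the equilibrium is unique (up to the free initial capital `K₀`). -/
theorem tse_fundamental_characterization
    (μ : Measure ℝ) (hμ : Assumption1 μ)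
    (β lam m D : ℝ) (hβ : β ∈ Set.Ioo (0 : ℝ) 1) (hlam : 1 ≤ lam)
    (hm : 0 < m) (hD : 0 < D)
    (hA3 : 1 - Phi μ (1 / m) < β * m * ∫ z in Set.Ioi (1 / m), z ∂μ) :
    ((∃ (R G : ℝ) (W K P B : ℕ → ℝ),
        TSE μ β lam m D R G W K P B ∧ ∀ t, P t = D / (R - 1)) ↔
      lam < lamBar β m μ) ∧
    (∀ (R G : ℝ) (W K P B : ℕ → ℝ),
      TSE μ β lam m D R G W K P B → (∀ t, P t = D / (R - 1)) →
      G = 1 ∧ β * (R + lam * premium μ m R) = 1 ∧ 1 < R ∧ R < 1 / β ∧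
        ∀ t, B t = 0) ∧
    (∀ (R G : ℝ) (W K P B : ℕ → ℝ) (R' G' : ℝ) (W' K' P' B' : ℕ → ℝ),
      TSE μ β lam m D R G W K P B → (∀ t, P t = D / (R - 1)) →
      TSE μ β lam m D R' G' W' K' P' B' → (∀ t, P' t = D / (R' - 1)) →
      R = R' ∧ G = G' ∧ W = W' ∧ P = P' ∧ B = B' ∧ ∀ t, K (t + 1) = K' (t + 1)) := by
  haveI := hμ.prob
  obtain ⟨hβ0, hβ1⟩ := hβ
  have hlam0 : (0 : ℝ) < lam := lt_of_lt_of_le one_pos hlam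
  have hA3' : (1 - β) * TseAux.sT μ (1 / m) < β * premium μ m 1 :=
    TseAux.a3_premium hμ hm hA3
  refine ⟨⟨?_, ?_⟩, ?_, ?_⟩
  · rintro ⟨R, G, W, K, P, B, hTSE, hfund⟩
    obtain ⟨hG1, hroot, hRb, hB0, hWval⟩ :=
      TseAux.tse_props hμ ⟨hβ0, hβ1⟩ hlam hm hD hTSE hfund
    exact TseAux.root_lt_lamBar hμ ⟨hβ0, hβ1⟩ hlam hm hA3' hTSE.hR hroot
  · intro hlt
    obtain ⟨R, hR1, hRb, hroot, hthr'⟩ :=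
      TseAux.exists_root hμ ⟨hβ0, hβ1⟩ hlam hm hA3' hlt
    have hR1' : (0 : ℝ) < R - 1 := by linarith
    have hRne : R - 1 ≠ 0 := hR1'.ne'
    have hDne : D ≠ 0 := hD.ne'
    set c := lam * Phi μ (R / m) + 1 - lam with hcdef
    have hphi := TseAux.phi_add_sT μ (R / m)
    have hsT : TseAux.sT μ (R / m) < 1 / lam := by
      rw [lt_div_iff₀ hlam0, mul_comm]; exact hthr'
    have hthr : 1 - 1 / lam < Phi μ (R / m) := by linarith
    have hc : 0 < c := by
      have h2 : lam * (1 - 1 / lam) = lam - 1 := by field_simp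
      have h1 := mul_lt_mul_of_pos_left hthr hlam0
      simp only [hcdef]; linarith
    set Pb := D / (R - 1) with hPbdef
    have hPb : 0 < Pb := div_pos hD hR1'
    set W0 := Pb / (β * c) with hW0def
    have hbc : 0 < β * c := mul_pos hβ0 hc
    have hW0 : 0 < W0 := div_pos hPb hbc
    have hPbW : Pb = β * c * W0 := by rw [hW0def]; field_simp
    set I := ∫ z in Set.Ioi (R / m), z ∂μ with hIdef
    have hprem := TseAux.premium_eq hμ hm R
    rw [← hIdef] at hprem
    have key : (1 : ℝ) = β * lam * m * I + R * (β * c) := by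
      simp only [hcdef]
      linear_combination (-1 : ℝ) * hroot + β * lam * hprem - R * β * lam * hphi
    refine ⟨R, 1, fun _ => W0, fun _ => β * lam * W0 * I, fun _ => Pb, fun _ => 0,
      ⟨hR1, one_pos, hthr, fun _ => hW0, fun _ => hPb, ?_, hroot.symm,
        fun _ => (one_mul W0).symm, fun _ => rfl, ?_, ?_, ?_⟩, fun _ => hPbdef⟩
    · intro t
      rw [hPbdef]
      field_simp
      ring
    · intro t
      show Pb + 0 = β * (lam * Phi μ (R / m) + 1 - lam) * W0
      rw [← hcdef, hPbW]; ring
    · intro t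
      show W0 = m * (β * lam * W0 * I) + R * (Pb + 0)
      linear_combination W0 * key - R * hPbW
    · simp only [zero_div]
      exact tendsto_const_nhds
  · intro R G W K P B hTSE hfund
    obtain ⟨hG1, hroot, hRb, hB0, hWval⟩ :=
      TseAux.tse_props hμ ⟨hβ0, hβ1⟩ hlam hm hD hTSE hfund
    exact ⟨hG1, hroot, hTSE.hR, hRb, hB0⟩
  · intro R G W K P B R' G' W' K' P' B' hTSE hfund hTSE' hfund'
    obtain ⟨hG1, hroot, hRb, hB0, hWval⟩ :=
      TseAux.tse_props hμ ⟨hβ0, hβ1⟩ hlam hm hD hTSE hfund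
    obtain ⟨hG1', hroot', hRb', hB0', hWval'⟩ :=
      TseAux.tse_props hμ ⟨hβ0, hβ1⟩ hlam hm hD hTSE' hfund'
    have hthr1 : lam * TseAux.sT μ (R / m) < 1 := (TseAux.thr_iff hlam0).mp hTSE.hthr
    have hthr2 : lam * TseAux.sT μ (R' / m) < 1 := (TseAux.thr_iff hlam0).mp hTSE'.hthr
    have hRR : R = R' := TseAux.root_unique hμ hβ0 hlam hm hroot hthr1 hroot' hthr2
    have hWW : W = W' := funext fun t => by rw [hWval t, hWval' t, hRR]
    exact ⟨hRR, by rw [hG1, hG1'], hWW,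
      funext fun t => by rw [hfund t, hfund' t, hRR],
      funext fun t => by rw [hB0 t, hB0' t],
      fun t => by rw [hTSE.Kdyn t, hTSE'.Kdyn t, hWW, hRR]⟩
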